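/- (Direction (i)⇒(ii) of the correspondence lemma) Let n ≥ k ≥ 1, v > n, c = (v-n)/(kv+n). Suppose x ∈ ℝ and z = (z₁,…,zₙ) ∈ ℤⁿ is such that exactly the first k entries z₁,…,z_k satisfy |zᵢ| ≥ 1 and zᵢ = 0 for i > k, and |x| ≤ Π₊(z)^{-v/n}. Define t by e^{(1-kc)t} = |z₁⋯z_k| and tᵢ by e^{-tᵢ}|zᵢ| = e^{-ct} for i ≤ k, tᵢ = 0 for i > k. Then t ≥ 0, t = Σᵢ tᵢ, and max(e^t|x|, max_i e^{-tᵢ}|zᵢ|) ≤ e^{-ct}. -/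

import Mathlib

open scoped BigOperators

/-- Π₊(z) = ∏ᵢ max(1,|zᵢ|). -/
noncomputable def piPlus {n : ℕ} (z : Fin n → ℤ) : ℝ :=
  ∏ i, max 1 |(z i : ℝ)|

/-- Direction (i)⇒(ii) of the correspondence lemma: from an integer vector `z`
whose first `k` entries are the nonzero ones and `|x| ≤ Π₊(z)^{-v/n}`, the
exponents `t`, `tᵢ` defined by `e^{(1-kc)t} = |z₁⋯z_k|` and `e^{-tᵢ}|zᵢ| = e^{-ct}`
(for `i ≤ k`, `tᵢ = 0` otherwise) satisfy `t ≥ 0`, `t = Σ tᵢ` and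
`max(e^t|x|, e^{-tᵢ}|zᵢ|) ≤ e^{-ct}`. -/
theorem correspondence_forward (n k : ℕ) (hk : 1 ≤ k) (hkn : k ≤ n)
    (v : ℝ) (hv : (n : ℝ) < v) (x : ℝ) (z : Fin n → ℤ)
    (hz : ∀ i : Fin n, ((i : ℕ) < k → 1 ≤ |z i|) ∧ (k ≤ (i : ℕ) → z i = 0))
    (hx : |x| ≤ piPlus z ^ (-(v / n))) :
    let c : ℝ := (v - n) / (k * v + n)
    let t : ℝ := Real.log (piPlus z) / (1 - k * c)
    let tv : Fin n → ℝ := fun i => if (i : ℕ) < k then Real.log |(z i : ℝ)| + c * t else 0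
    0 ≤ t ∧ t = ∑ i, tv i ∧
      Real.exp t * |x| ≤ Real.exp (-(c * t)) ∧
      ∀ i, Real.exp (-(tv i)) * |(z i : ℝ)| ≤ Real.exp (-(c * t)) := by
  intro c t tv
  have hn1 : 1 ≤ n := hk.trans hkn
  have hn0 : (0 : ℝ) < n := by exact_mod_cast hn1
  have hv0 : (0 : ℝ) < v := hn0.trans hv
  have hk0 : (0 : ℝ) < k := by exact_mod_cast hk
  have hd : (0 : ℝ) < (k : ℝ) * v + n := by positivity
  have h1kc : 1 - (k : ℝ) * c = n * (1 + k) / ((k : ℝ) * v + n) := by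
    simp only [c]; field_simp; ring
  have h1kc0 : 0 < 1 - (k : ℝ) * c := by rw [h1kc]; positivity
  have habs : ∀ i : Fin n, (i : ℕ) < k → 1 ≤ |(z i : ℝ)| := by
    intro i hi
    have h := (hz i).1 hi
    have : (1 : ℝ) ≤ ((|z i| : ℤ) : ℝ) := by exact_mod_cast h
    rwa [Int.cast_abs] at this
  have hmax : ∀ i : Fin n, max 1 |(z i : ℝ)| = if (i : ℕ) < k then |(z i : ℝ)| else 1 := by
    intro i
    by_cases hi : (i : ℕ) < k
    · simp [hi, max_eq_right (habs i hi)]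
    · have hzi : z i = 0 := (hz i).2 (le_of_not_gt hi)
      simp [hi, hzi]
  have hP1 : 1 ≤ piPlus z := by
    unfold piPlus
    calc (1 : ℝ) = ∏ _i : Fin n, 1 := by simp
      _ ≤ _ := Finset.prod_le_prod (fun i _ => zero_le_one) (fun i _ => le_max_left 1 _)
  have hP0 : 0 < piPlus z := lt_of_lt_of_le one_pos hP1
  have hlogP : Real.log (piPlus z)
      = ∑ i : Fin n, (if (i : ℕ) < k then Real.log |(z i : ℝ)| else 0) := by
    rw [piPlus, Real.log_prod (fun i _ =>
      ne_of_gt (lt_of_lt_of_le zero_lt_one (le_max_left 1 _)))]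
    refine Finset.sum_congr rfl fun i _ => ?_
    rw [hmax i]
    by_cases hi : (i : ℕ) < k <;> simp [hi]
  have hL : 0 ≤ Real.log (piPlus z) := Real.log_nonneg hP1
  have ht0 : 0 ≤ t := div_nonneg hL h1kc0.le
  have ht : (1 - (k : ℝ) * c) * t = Real.log (piPlus z) := by
    simp only [t]; field_simp
  refine ⟨ht0, ?_, ?_, ?_⟩
  · -- t = ∑ tv i
    have hsplit : ∀ i : Fin n, tv i
        = (if (i : ℕ) < k then Real.log |(z i : ℝ)| else 0)
          + (if (i : ℕ) < k then c * t else 0) := by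
      intro i; simp only [tv]; by_cases hi : (i : ℕ) < k <;> simp [hi]
    rw [Finset.sum_congr rfl fun i _ => hsplit i, Finset.sum_add_distrib, ← hlogP]
    have hcard : ∑ i : Fin n, (if (i : ℕ) < k then c * t else 0) = k * (c * t) := by
      rw [Fin.sum_univ_eq_sum_range (fun i => if i < k then c * t else 0),
        ← Finset.sum_filter]
      have : (Finset.range n).filter (· < k) = Finset.range k := by
        ext a; simp; omega
      rw [this, Finset.sum_const, Finset.card_range, nsmul_eq_mul]
    rw [hcard]
    nlinarith [ht]
  · -- exp t * |x| ≤ exp (-(c*t))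
    have hid : v / n * (1 - (k : ℝ) * c) = 1 + c := by
      simp only [c]; field_simp; ring
    have key : t + Real.log (piPlus z) * (-(v / n)) = -(c * t) := by
      rw [← ht]; linear_combination (-t) * hid
    calc Real.exp t * |x|
        ≤ Real.exp t * Real.exp (Real.log (piPlus z) * (-(v / n))) := by
          apply mul_le_mul_of_nonneg_left _ (Real.exp_pos t).le
          rwa [← Real.rpow_def_of_pos hP0]
      _ = Real.exp (-(c * t)) := by rw [← Real.exp_add, key]
  · intro i
    by_cases hi : (i : ℕ) < k
    · have hzpos : 0 < |(z i : ℝ)| := lt_of_lt_of_le one_pos (habs i hi)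
      simp only [tv, if_pos hi, neg_add, Real.exp_add, Real.exp_neg,
        Real.exp_log hzpos]
      rw [mul_comm ((|(z i : ℝ)|)⁻¹) _, mul_assoc, inv_mul_cancel₀ (ne_of_gt hzpos), mul_one]
    · have hzi : z i = 0 := (hz i).2 (le_of_not_gt hi)
      simp [tv, hi, hzi, (Real.exp_pos _).le]
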